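/- Let Ξ = [[−P, Rᵀ],[R, Q]] be a symmetric real block matrix with P𝟏 = 0. Then Ξ is negative definite on D = {(ξ,ε): 𝟏ᵀξ = 0} if and only if (a) Q is negative definite and (b) P + Rᵀ Q^{-1} R is positive definite on {ξ : 𝟏ᵀξ = 0}. -/
import Mathlib


open Matrix

private lemma quad_eq {N : ℕ} (P Q R : Matrix (Fin N) (Fin N) ℝ) (ξ ε : Fin N → ℝ) :
    Sum.elim ξ ε ⬝ᵥ (Matrix.fromBlocks (-P) Rᵀ R Q).mulVec (Sum.elim ξ ε)
      = -(ξ ⬝ᵥ P.mulVec ξ) + 2 * (ε ⬝ᵥ R.mulVec ξ) + ε ⬝ᵥ Q.mulVec ε := by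
  rw [fromBlocks_mulVec, sumElim_dotProduct_sumElim]
  simp only [Sum.elim_comp_inl, Sum.elim_comp_inr, dotProduct_add]
  have h1 : ξ ⬝ᵥ Rᵀ.mulVec ε = ε ⬝ᵥ R.mulVec ξ := by
    rw [dotProduct_mulVec, vecMul_transpose, dotProduct_comm]
  rw [h1, neg_mulVec, dotProduct_neg]
  ring

private lemma key_eq {N : ℕ} (P Q R : Matrix (Fin N) (Fin N) ℝ) (hQ : Qᵀ = Q)
    (hu : IsUnit Q.det) (ξ ε : Fin N → ℝ) :
    -(ξ ⬝ᵥ P.mulVec ξ) + 2 * (ε ⬝ᵥ R.mulVec ξ) + ε ⬝ᵥ Q.mulVec ε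
      = -(ξ ⬝ᵥ (P + Rᵀ * Q⁻¹ * R).mulVec ξ)
        + (ε + Q⁻¹.mulVec (R.mulVec ξ)) ⬝ᵥ Q.mulVec (ε + Q⁻¹.mulVec (R.mulVec ξ)) := by
  set u := Q⁻¹.mulVec (R.mulVec ξ) with hu_def
  have hQu : Q.mulVec u = R.mulVec ξ := by
    rw [hu_def, mulVec_mulVec, Matrix.mul_nonsing_inv _ hu, one_mulVec]
  have hvm : u ᵥ* Q = R.mulVec ξ := by
    rw [← hQ, vecMul_transpose]; exact hQu
  have huε : u ⬝ᵥ Q.mulVec ε = ε ⬝ᵥ R.mulVec ξ := by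
    rw [dotProduct_mulVec, hvm, dotProduct_comm]
  have hS : ξ ⬝ᵥ (Rᵀ * Q⁻¹ * R).mulVec ξ = u ⬝ᵥ R.mulVec ξ := by
    rw [Matrix.mul_assoc, ← mulVec_mulVec, ← mulVec_mulVec, dotProduct_mulVec,
      vecMul_transpose, ← hu_def, dotProduct_comm]
  simp only [add_mulVec, mulVec_add, dotProduct_add, add_dotProduct, hS, hQu, huε]
  ring

theorem stmt_11 (N : ℕ) (P Q R : Matrix (Fin N) (Fin N) ℝ)
    (hP : Pᵀ = P) (hQ : Qᵀ = Q)
    (hP1 : P.mulVec (fun _ => 1) = 0) (hR1 : R.mulVec (fun _ => 1) = 0) :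
    (∀ z : Fin N ⊕ Fin N → ℝ, (∑ j, z (Sum.inl j)) = 0 → z ≠ 0 →
        z ⬝ᵥ (Matrix.fromBlocks (-P) Rᵀ R Q).mulVec z < 0) ↔
    ((∀ ε : Fin N → ℝ, ε ≠ 0 → ε ⬝ᵥ Q.mulVec ε < 0) ∧
     (∀ ξ : Fin N → ℝ, (∑ j, ξ j) = 0 → ξ ≠ 0 →
        0 < ξ ⬝ᵥ (P + Rᵀ * Q⁻¹ * R).mulVec ξ)) := by
  constructor
  · intro h
    have hQneg : ∀ ε : Fin N → ℝ, ε ≠ 0 → ε ⬝ᵥ Q.mulVec ε < 0 := by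
      intro ε hε
      have hz : (Sum.elim (0 : Fin N → ℝ) ε) ≠ 0 := by
        intro hc
        apply hε
        funext i
        exact congrFun hc (Sum.inr i)
      have := h (Sum.elim 0 ε) (by simp) hz
      rwa [quad_eq, zero_dotProduct, mulVec_zero, dotProduct_zero, mul_zero,
        neg_zero, zero_add, zero_add] at this
    have hu : IsUnit Q.det := by
      rw [isUnit_iff_ne_zero]
      intro hdet
      obtain ⟨v, hv, hQv⟩ := (Matrix.exists_mulVec_eq_zero_iff).2 hdet
      have := hQneg v hv
      rw [hQv, dotProduct_zero] at this
      exact lt_irrefl 0 this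
    refine ⟨hQneg, fun ξ hsum hξ => ?_⟩
    set ε : Fin N → ℝ := -(Q⁻¹.mulVec (R.mulVec ξ)) with hε_def
    have hz : (Sum.elim ξ ε) ≠ 0 := by
      intro hc
      apply hξ
      funext i
      exact congrFun hc (Sum.inl i)
    have hlt := h (Sum.elim ξ ε) (by simpa using hsum) hz
    rw [quad_eq, key_eq P Q R hQ hu, hε_def, neg_add_cancel, zero_dotProduct, add_zero] at hlt
    linarith
  · rintro ⟨hQneg, hS⟩ z hsum hz
    have hu : IsUnit Q.det := by
      rw [isUnit_iff_ne_zero]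
      intro hdet
      obtain ⟨v, hv, hQv⟩ := (Matrix.exists_mulVec_eq_zero_iff).2 hdet
      have := hQneg v hv
      rw [hQv, dotProduct_zero] at this
      exact lt_irrefl 0 this
    set ξ : Fin N → ℝ := fun i => z (Sum.inl i) with hξ_def
    set ε : Fin N → ℝ := fun i => z (Sum.inr i) with hε_def
    have hze : z = Sum.elim ξ ε := by
      funext i; cases i <;> rfl
    rw [hze, quad_eq, key_eq P Q R hQ hu]
    set w : Fin N → ℝ := ε + Q⁻¹.mulVec (R.mulVec ξ) with hw_def
    have hwQ : w ⬝ᵥ Q.mulVec w ≤ 0 := by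
      by_cases hw : w = 0
      · rw [hw, zero_dotProduct]
      · exact le_of_lt (hQneg w hw)
    by_cases hξ0 : ξ = 0
    · have hε0 : ε ≠ 0 := by
        intro hc
        apply hz
        rw [hze, hξ0, hc]
        funext i; cases i <;> rfl
      have hw0 : w = ε := by
        rw [hw_def, hξ0, mulVec_zero, mulVec_zero, add_zero]
      have hξS : ξ ⬝ᵥ (P + Rᵀ * Q⁻¹ * R).mulVec ξ = 0 := by
        rw [hξ0, zero_dotProduct]
      rw [hξS, hw0, neg_zero, zero_add]
      exact hQneg ε hε0
    · have h1 : 0 < ξ ⬝ᵥ (P + Rᵀ * Q⁻¹ * R).mulVec ξ := hS ξ hsum hξ0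
      linarith
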